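/- Let n be a positive integer, a ∈ ℝⁿ, and b ∈ ℝ. Set r = max(b, 0) / (1 + ‖a‖²), u* = r • a, and δ* = r. Then (u*, δ*) satisfies the constraint ⟪a, u*⟫ + δ* ≥ b, and for every pair (u, δ) ∈ ℝⁿ × ℝ with ⟪a, u⟫ + δ ≥ b one has ‖u*‖² + (δ*)² ≤ ‖u‖² + δ², with equality if and only if (u, δ) = (u*, δ*). In other words, (u*, δ*) is the unique minimizer of ‖u‖² + δ² subject to ⟪a, u⟫ + δ ≥ b. -/

import Mathlib

open Real

/-- Closed-form KKT solution of the relaxed minimum-energy QP (Proposition 1):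
with `r = max b 0 / (1 + ‖a‖²)`, the pair `(u*, δ*) = (r • a, r)` is feasible for
the constraint `⟪a, u⟫ + δ ≥ b` and is the unique minimizer of `‖u‖² + δ²`
over all feasible pairs. -/
theorem relaxed_min_energy_qp_solution
    (n : ℕ) (hn : 0 < n) (a : EuclideanSpace ℝ (Fin n)) (b : ℝ) :
    let r : ℝ := max b 0 / (1 + ‖a‖ ^ 2)
    let ustar : EuclideanSpace ℝ (Fin n) := r • a
    let δstar : ℝ := r
    ((inner ℝ a ustar : ℝ) + δstar ≥ b) ∧
      ∀ (u : EuclideanSpace ℝ (Fin n)) (δ : ℝ), (inner ℝ a u : ℝ) + δ ≥ b →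
        (‖ustar‖ ^ 2 + δstar ^ 2 ≤ ‖u‖ ^ 2 + δ ^ 2 ∧
          (‖ustar‖ ^ 2 + δstar ^ 2 = ‖u‖ ^ 2 + δ ^ 2 ↔ u = ustar ∧ δ = δstar)) := by
  intro r ustar δstar
  have ha2 : (0:ℝ) < 1 + ‖a‖ ^ 2 := by positivity
  have hr : r * (1 + ‖a‖ ^ 2) = max b 0 := div_mul_cancel₀ _ (ne_of_gt ha2)
  have hr0 : 0 ≤ r := div_nonneg (le_max_right _ _) ha2.le
  have hinner : (inner ℝ a ustar : ℝ) = r * ‖a‖ ^ 2 := by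
    show (inner ℝ a (r • a) : ℝ) = r * ‖a‖ ^ 2
    rw [real_inner_smul_right, real_inner_self_eq_norm_sq]
  have hnormstar : ‖ustar‖ ^ 2 = r ^ 2 * ‖a‖ ^ 2 := by
    show ‖r • a‖ ^ 2 = r ^ 2 * ‖a‖ ^ 2
    rw [norm_smul, mul_pow, Real.norm_eq_abs, sq_abs]
  have hstar : ‖ustar‖ ^ 2 + δstar ^ 2 = r ^ 2 * ‖a‖ ^ 2 + r ^ 2 := by
    rw [hnormstar]
  constructor
  · have : (inner ℝ a ustar : ℝ) + δstar = max b 0 := by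
      rw [hinner]; show r * ‖a‖ ^ 2 + r = max b 0; linarith [hr]
    rw [this]; exact le_max_left _ _
  · intro u δ hfeas
    have hterm : 0 ≤ 2 * r * ((inner ℝ a u : ℝ) + δ - max b 0) := by
      rcases le_or_gt b 0 with hb | hb
      · have : r = 0 := by simp [r, max_eq_right hb]
        simp [this]
      · have hm : max b 0 = b := max_eq_left hb.le
        have h1 : 0 ≤ (inner ℝ a u : ℝ) + δ - max b 0 := by rw [hm]; linarith
        positivity
    have hiu : (inner ℝ u ustar : ℝ) = r * (inner ℝ a u : ℝ) := by
      show (inner ℝ u (r • a) : ℝ) = r * (inner ℝ a u : ℝ)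
      rw [real_inner_smul_right, real_inner_comm]
    have key : ‖u‖ ^ 2 + δ ^ 2 =
        (r ^ 2 * ‖a‖ ^ 2 + r ^ 2) + (‖u - ustar‖ ^ 2 + (δ - r) ^ 2)
          + 2 * r * ((inner ℝ a u : ℝ) + δ - max b 0) := by
      have hexp : ‖u - ustar‖ ^ 2 = ‖u‖ ^ 2 - 2 * (inner ℝ u ustar : ℝ) + ‖ustar‖ ^ 2 := by
        rw [norm_sub_sq_real]
      rw [hexp, hiu, hnormstar]
      linear_combination (-2 * r) * hr
    have hsq1 : (0:ℝ) ≤ ‖u - ustar‖ ^ 2 := by positivity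
    have hsq2 : (0:ℝ) ≤ (δ - r) ^ 2 := by positivity
    constructor
    · rw [hstar]; linarith
    · constructor
      · intro heq
        rw [hstar] at heq
        have h1 : ‖u - ustar‖ ^ 2 = 0 := by linarith
        have h2 : (δ - r) ^ 2 = 0 := by linarith
        have hu : u = ustar :=
          sub_eq_zero.mp (norm_eq_zero.mp (pow_eq_zero_iff two_ne_zero |>.mp h1))
        have hδ : δ = δstar := sub_eq_zero.mp (pow_eq_zero_iff two_ne_zero |>.mp h2)
        exact ⟨hu, hδ⟩
      · rintro ⟨rfl, rfl⟩
        rfl
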